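/- Let X be a Banach space whose dual X* has Property(K*). Then c₀ does not embed isomorphically into X*, i.e., there is no closed subspace of X* isomorphic (as a topological vector space, via a bounded linear bijection with bounded inverse) to the space c₀ of real sequences converging to 0 with the supremum norm. -/

import Mathlib

open Filter Topology Metric NormedSpace ZeroAtInfty

/-- The dual `X*` has Property(K*). -/
def PropertyKStar (X : Type*) [NormedAddCommGroup X] [NormedSpace ℝ X] : Prop :=
  ∃ K : ℝ, 0 ≤ K ∧ K < 1 ∧
    ∀ (xs : ℕ → X →L[ℝ] ℝ) (x : X →L[ℝ] ℝ),
      (∀ n, ‖xs n‖ ≤ 1) →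
      (∀ v : X, Tendsto (fun n => xs n v) atTop (𝓝 0)) →
      Tendsto (fun n => ‖xs n‖) atTop (𝓝 1) →
      liminf (fun n => ‖xs n - x‖) atTop ≤ 1 →
      ‖x‖ ≤ K

namespace StmtAux

/-- Build an element of `C₀(ℕ, ℝ)` from an eventually-zero function. -/
noncomputable def mkC0 (b : ℕ → ℝ) (L : ℕ) (hb : ∀ i, L ≤ i → b i = 0) : C₀(ℕ, ℝ) :=
  ⟨⟨b, continuous_of_discreteTopology⟩, by
    rw [cocompact_eq_cofinite, Nat.cofinite_eq_atTop]
    refine Tendsto.congr' ?_ tendsto_const_nhds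
    filter_upwards [eventually_ge_atTop L] with i hi
    exact (hb i hi).symm⟩

@[simp] lemma mkC0_apply (b : ℕ → ℝ) (L : ℕ) (hb : ∀ i, L ≤ i → b i = 0) (i : ℕ) :
    mkC0 b L hb i = b i := rfl

lemma C0_abs_le_norm (g : C₀(ℕ, ℝ)) (i : ℕ) : |g i| ≤ ‖g‖ := by
  rw [← ZeroAtInftyContinuousMap.norm_toBCF_eq_norm]
  exact g.toBCF.norm_coe_le_norm i

lemma C0_norm_le (g : C₀(ℕ, ℝ)) (C : ℝ) (hC : 0 ≤ C) (h : ∀ i, |g i| ≤ C) : ‖g‖ ≤ C := by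
  rw [← ZeroAtInftyContinuousMap.norm_toBCF_eq_norm]
  exact BoundedContinuousFunction.norm_le hC |>.2 h

lemma C0_sum_apply {γ : Type*} (s : Finset γ) (h : γ → C₀(ℕ, ℝ)) (i : ℕ) :
    (∑ n ∈ s, h n) i = ∑ n ∈ s, h n i := by
  classical
  induction s using Finset.induction_on with
  | empty => simp
  | insert _ _ hx ih =>
      rw [Finset.sum_insert hx, Finset.sum_insert hx,
        ZeroAtInftyContinuousMap.add_apply, ih]

lemma tele (A : ℕ → ℝ) (m : ℕ) :
    ∑ j ∈ Finset.Ico 1 (m + 1), (A j - A (j + 1)) = A 1 - A (m + 1) := by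
  induction m with
  | zero => simp
  | succ n ih =>
      rw [Finset.sum_Ico_succ_top (by omega), ih]
      ring

lemma bound_aux {E F : Type*} [NormedAddCommGroup E] [NormedSpace ℝ E] [NormedAddCommGroup F]
    [NormedSpace ℝ F] (f : E → F) (hadd : ∀ x y, f (x + y) = f x + f y)
    (hsmul : ∀ (c : ℝ) x, f (c • x) = c • f x) (hf : Continuous f) :
    ∃ C : ℝ, 0 ≤ C ∧ ∀ x, ‖f x‖ ≤ C * ‖x‖ :=
  let g : E →L[ℝ] F := ⟨⟨⟨f, hadd⟩, hsmul⟩, hf⟩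
  ⟨‖g‖, norm_nonneg _, g.le_opNorm⟩

/-- The recursion producing the starting points of the blocks. -/
noncomputable def MS {α : Type*} (sel : ℕ → ℕ → α × ℕ) (N1 : ℕ) : ℕ → ℕ
  | 0 => N1
  | j + 1 => (sel j (MS sel N1 j)).2

end StmtAux

set_option maxHeartbeats 1600000000 in
theorem stmt13 (X : Type*) [NormedAddCommGroup X] [NormedSpace ℝ X] [CompleteSpace X]
    (hK : PropertyKStar X) :
    ¬ ∃ S : Submodule ℝ (X →L[ℝ] ℝ), IsClosed (S : Set (X →L[ℝ] ℝ)) ∧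
      Nonempty (C₀(ℕ, ℝ) ≃L[ℝ] S) := by
  classical
  open StmtAux in
  rintro ⟨S, -, ⟨E⟩⟩
  obtain ⟨K, hK0, hK1, hprop⟩ := hK
  -- the embedding J : c₀ → X*
  set J : C₀(ℕ, ℝ) →L[ℝ] (X →L[ℝ] ℝ) :=
    S.subtypeL.comp (E : C₀(ℕ, ℝ) →L[ℝ] S) with hJdef
  obtain ⟨CE, -, hCE⟩ := StmtAux.bound_aux (⇑E.symm) (map_add E.symm) (map_smul E.symm)
    E.symm.continuous
  set CINV : ℝ := max CE 1 with hCINVdef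
  have hCINV_pos : 0 < CINV := lt_of_lt_of_le one_pos (le_max_right _ _)
  have hlow : ∀ g : C₀(ℕ, ℝ), ‖g‖ ≤ CINV * ‖J g‖ := by
    intro g
    have h1 : g = E.symm (E g) := (E.symm_apply_apply g).symm
    have h2 : ‖E.symm (E g)‖ ≤ CE * ‖E g‖ :=
      hCE (E g)
    have h3 : ‖J g‖ = ‖E g‖ := rfl
    calc ‖g‖ = ‖E.symm (E g)‖ := by rw [← h1]
    _ ≤ CE * ‖E g‖ := h2
    _ ≤ CINV * ‖J g‖ := by
        rw [h3]; exact mul_le_mul_of_nonneg_right (le_max_left _ _) (norm_nonneg (E g))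
  set a : ℝ := CINV⁻¹ with hadef
  have ha_pos : 0 < a := inv_pos.2 hCINV_pos
  have hlow' : ∀ g : C₀(ℕ, ℝ), a * ‖g‖ ≤ ‖J g‖ := by
    intro g
    have := hlow g
    calc a * ‖g‖ ≤ a * (CINV * ‖J g‖) :=
          mul_le_mul_of_nonneg_left this ha_pos.le
    _ = ‖J g‖ := by
        rw [← mul_assoc, inv_mul_cancel₀ hCINV_pos.ne', one_mul]
  -- basis vectors
  obtain ⟨eb, hebdef⟩ : ∃ eb : ℕ → C₀(ℕ, ℝ), eb = fun n =>
      mkC0 (fun i => if i = n then 1 else 0) (n + 1)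
        (fun i hi => by simp only [if_neg (by omega : i ≠ n)]) := ⟨_, rfl⟩
  have heb_apply : ∀ n i, eb n i = if i = n then 1 else 0 := fun n i => by
    rw [hebdef]; rfl
  have heb_norm : ∀ n, ‖eb n‖ = 1 := by
    intro n
    refine le_antisymm (C0_norm_le _ 1 one_pos.le fun i => ?_) ?_
    · rw [heb_apply]; split <;> simp
    · have := C0_abs_le_norm (eb n) n
      rw [heb_apply, if_pos rfl] at this
      simpa using this
  obtain ⟨f, hfdef⟩ : ∃ f : ℕ → (X →L[ℝ] ℝ), f = fun n => J (eb n) := ⟨_, rfl⟩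
  have hf_apply : ∀ n, f n = J (eb n) := fun n => by rw [hfdef]
  have hf_low : ∀ n, a ≤ ‖f n‖ := by
    intro n
    have := hlow' (eb n)
    rw [heb_norm n, mul_one] at this
    rwa [hf_apply]
  -- summability of ∑ |f n v|
  have hsum : ∀ v : X, Summable (fun n => |f n v|) := by
    intro v
    refine summable_of_sum_le (c := ‖J‖ * ‖v‖) (fun n => abs_nonneg _) ?_
    intro F
    obtain ⟨s, hsdef⟩ : ∃ s : ℕ → ℝ, s = fun n => if f n v < 0 then -1 else 1 := ⟨_, rfl⟩
    have hs_abs : ∀ n, |s n| ≤ 1 := by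
      intro n; rw [hsdef]; dsimp only; split <;> simp
    obtain ⟨gF, hgFdef⟩ : ∃ gF : C₀(ℕ, ℝ), gF = ∑ n ∈ F, s n • eb n := ⟨_, rfl⟩
    have hgF_apply : ∀ i, gF i = if i ∈ F then s i else 0 := by
      intro i
      rw [hgFdef, C0_sum_apply]
      have : ∀ n ∈ F, (s n • eb n) i = if i = n then s n else 0 := by
        intro n _
        rw [ZeroAtInftyContinuousMap.smul_apply, heb_apply]
        split <;> simp
      rw [Finset.sum_congr rfl this]
      simp [Finset.sum_ite_eq]
    have hgF_norm : ‖gF‖ ≤ 1 := by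
      refine C0_norm_le _ 1 one_pos.le fun i => ?_
      rw [hgF_apply]
      split
      · exact hs_abs i
      · simp
    have hval : J gF v = ∑ n ∈ F, |f n v| := by
      rw [hgFdef, map_sum, ContinuousLinearMap.sum_apply]
      refine Finset.sum_congr rfl fun n _ => ?_
      rw [map_smul, ContinuousLinearMap.smul_apply, smul_eq_mul, ← hf_apply]
      rw [hsdef]; dsimp only
      split
      · rename_i h; rw [abs_of_neg h]; ring
      · rename_i h; rw [abs_of_nonneg (not_lt.1 h)]; ring
    have : J gF v ≤ ‖J‖ * ‖v‖ := by
      calc J gF v ≤ |J gF v| := le_abs_self _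
      _ ≤ ‖J gF‖ * ‖v‖ := (J gF).le_opNorm v
      _ ≤ (‖J‖ * ‖gF‖) * ‖v‖ :=
          mul_le_mul_of_nonneg_right (J.le_opNorm gF) (norm_nonneg _)
      _ ≤ (‖J‖ * 1) * ‖v‖ := by
          have h := mul_le_mul_of_nonneg_left hgF_norm (norm_nonneg J)
          exact mul_le_mul_of_nonneg_right h (norm_nonneg v)
      _ = ‖J‖ * ‖v‖ := by ring
    rw [hval] at this
    exact this
  -- tails
  obtain ⟨G, hGdef⟩ : ∃ G : ℕ → X → ℝ, G = fun M v => ∑' n, |f (n + M) v| := ⟨_, rfl⟩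
  have hsum_shift : ∀ (M : ℕ) (v : X), Summable (fun n => |f (n + M) v|) := by
    intro M v
    exact (summable_nat_add_iff M).2 (hsum v)
  have hG_nonneg : ∀ M v, 0 ≤ G M v := by
    intro M v; rw [hGdef]; exact tsum_nonneg fun n => abs_nonneg _
  have hG_split : ∀ (A d : ℕ) (v : X),
      G A v = (∑ i ∈ Finset.range d, |f (i + A) v|) + G (A + d) v := by
    intro A d v
    rw [hGdef]
    dsimp only
    rw [← Summable.sum_add_tsum_nat_add d (hsum_shift A v)]
    congr 1
    exact tsum_congr fun i => by rw [show i + d + A = i + (A + d) by omega]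
  have hG_anti : ∀ (A B : ℕ) (v : X), A ≤ B → G B v ≤ G A v := by
    intro A B v hAB
    have := hG_split A (B - A) v
    rw [show A + (B - A) = B by omega] at this
    have h0 : 0 ≤ ∑ i ∈ Finset.range (B - A), |f (i + A) v| :=
      Finset.sum_nonneg fun i _ => abs_nonneg _
    linarith
  have hG_Ico : ∀ (A B : ℕ) (v : X), A ≤ B →
      (∑ i ∈ Finset.Ico A B, |f i v|) = G A v - G B v := by
    intro A B v hAB
    have h := hG_split A (B - A) v
    rw [show A + (B - A) = B by omega] at h
    rw [Finset.sum_Ico_eq_sum_range]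
    rw [show B - A = B - A from rfl]
    have : ∀ i ∈ Finset.range (B - A), |f (A + i) v| = |f (i + A) v| := by
      intro i _; rw [Nat.add_comm]
    rw [Finset.sum_congr rfl this]
    linarith
  have hG_tend : ∀ v : X, Tendsto (fun M => G M v) atTop (𝓝 0) := by
    intro v
    have h := tendsto_sum_nat_add (fun n => |f n v|)
    rw [hGdef]
    simpa using h
  -- expansion of finitely supported elements
  have hexpand : ∀ (g : C₀(ℕ, ℝ)) (A B : ℕ), A ≤ B →
      (∀ i, i < A → g i = 0) → (∀ i, B ≤ i → g i = 0) →
      g = ∑ i ∈ Finset.Ico A B, g i • eb i := by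
    intro g A B hAB hlo hhi
    ext j
    rw [C0_sum_apply]
    have hterms : ∀ i ∈ Finset.Ico A B, (g i • eb i) j = if j = i then g i else 0 := by
      intro i _
      rw [ZeroAtInftyContinuousMap.smul_apply, heb_apply]
      split <;> simp
    rw [Finset.sum_congr rfl hterms]
    rw [Finset.sum_ite_eq (Finset.Ico A B) j g]
    by_cases hj : j ∈ Finset.Ico A B
    · rw [if_pos hj]
    · rw [if_neg hj]
      rw [Finset.mem_Ico] at hj
      rcases (not_and_or.1 hj) with h | h
      · exact hlo j (not_le.1 h)
      · exact hhi j (not_lt.1 h)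
  -- value bound for supported elements
  have hJg_v : ∀ (g : C₀(ℕ, ℝ)) (A B : ℕ) (v : X), A ≤ B → ‖g‖ ≤ 1 →
      (∀ i, i < A → g i = 0) → (∀ i, B ≤ i → g i = 0) →
      |J g v| ≤ G A v - G B v := by
    intro g A B v hAB hg hlo hhi
    have hg_ex := hexpand g A B hAB hlo hhi
    have hval : J g v = ∑ i ∈ Finset.Ico A B, g i * f i v := by
      conv_lhs => rw [hg_ex]
      rw [map_sum, ContinuousLinearMap.sum_apply]
      exact Finset.sum_congr rfl fun i _ => by
        rw [map_smul, ContinuousLinearMap.smul_apply, smul_eq_mul, ← hf_apply]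
    rw [hval]
    calc |∑ i ∈ Finset.Ico A B, g i * f i v| ≤ ∑ i ∈ Finset.Ico A B, |g i * f i v| :=
        Finset.abs_sum_le_sum_abs _ _
    _ ≤ ∑ i ∈ Finset.Ico A B, |f i v| := by
        refine Finset.sum_le_sum fun i _ => ?_
        rw [abs_mul]
        have h1 : |g i| ≤ 1 := le_trans (C0_abs_le_norm g i) hg
        nlinarith [abs_nonneg (f i v), abs_nonneg (g i)]
    _ = G A v - G B v := hG_Ico A B v hAB
  -- tail suprema
  obtain ⟨SSet, hSSdef⟩ : ∃ SSet : ℕ → Set ℝ, SSet = fun A =>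
      {x | ∃ g : C₀(ℕ, ℝ), (‖g‖ ≤ 1 ∧ (∀ i, i < A → g i = 0) ∧ ∃ B, ∀ i, B ≤ i → g i = 0)
        ∧ x = ‖J g‖} := ⟨_, rfl⟩
  have hSS_mem : ∀ (A : ℕ) (g : C₀(ℕ, ℝ)), ‖g‖ ≤ 1 → (∀ i, i < A → g i = 0) →
      (∃ B, ∀ i, B ≤ i → g i = 0) → ‖J g‖ ∈ SSet A := by
    intro A g h1 h2 h3
    rw [hSSdef]
    exact ⟨g, ⟨h1, h2, h3⟩, rfl⟩
  have heb_mem : ∀ A, ‖J (eb A)‖ ∈ SSet A := by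
    intro A
    refine hSS_mem A (eb A) (le_of_eq (heb_norm A)) (fun i hi => ?_) ⟨A + 1, fun i hi => ?_⟩
    · rw [heb_apply, if_neg (by omega)]
    · rw [heb_apply, if_neg (by omega)]
  have hSS_ne : ∀ A, (SSet A).Nonempty := fun A => ⟨_, heb_mem A⟩
  have hSS_bdd : ∀ A, BddAbove (SSet A) := by
    intro A
    refine ⟨‖J‖, fun x hx => ?_⟩
    rw [hSSdef] at hx
    obtain ⟨g, ⟨h1, -, -⟩, rfl⟩ := hx
    calc ‖J g‖ ≤ ‖J‖ * ‖g‖ := J.le_opNorm g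
    _ ≤ ‖J‖ * 1 := mul_le_mul_of_nonneg_left h1 (norm_nonneg J)
    _ = ‖J‖ := mul_one _
  obtain ⟨ρ, hρdef⟩ : ∃ ρ : ℕ → ℝ, ρ = fun A => sSup (SSet A) := ⟨_, rfl⟩
  have hρ_ub : ∀ (A : ℕ) (g : C₀(ℕ, ℝ)), ‖g‖ ≤ 1 → (∀ i, i < A → g i = 0) →
      (∃ B, ∀ i, B ≤ i → g i = 0) → ‖J g‖ ≤ ρ A := by
    intro A g h1 h2 h3
    rw [hρdef]
    exact le_csSup (hSS_bdd A) (hSS_mem A g h1 h2 h3)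
  have hρ_ge_a : ∀ A, a ≤ ρ A := by
    intro A
    have h1 : a ≤ ‖J (eb A)‖ := hf_low A |>.trans (by rw [hf_apply])
    refine le_trans h1 ?_
    rw [hρdef]
    exact le_csSup (hSS_bdd A) (heb_mem A)
  obtain ⟨r, hrdef⟩ : ∃ r : ℝ, r = ⨅ A, ρ A := ⟨_, rfl⟩
  have hr_le : ∀ A, r ≤ ρ A := by
    intro A
    rw [hrdef]
    exact ciInf_le ⟨a, fun x ⟨A', hA'⟩ => hA' ▸ hρ_ge_a A'⟩ A
  have ha_le_r : a ≤ r := by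
    rw [hrdef]; exact le_ciInf hρ_ge_a
  have hr_pos : 0 < r := lt_of_lt_of_le ha_pos ha_le_r
  -- the constant η
  obtain ⟨η, hηdef⟩ : ∃ η : ℝ, η = (1 - K) / 10 := ⟨_, rfl⟩
  have hη_pos : 0 < η := by rw [hηdef]; linarith
  have hη_le : η ≤ 1 / 10 := by rw [hηdef]; linarith
  -- choose the starting point
  obtain ⟨N1, hN1⟩ : ∃ N1, ρ N1 < r + η * a := by
    by_contra h
    push_neg at h
    have h2 : r + η * a ≤ r := by
      conv_rhs => rw [hrdef]
      exact le_ciInf h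
    have h3 : 0 < η * a := mul_pos hη_pos ha_pos
    linarith
  have hρM0_ge : r ≤ ρ N1 := hr_le N1
  have hρM0_pos : 0 < ρ N1 := lt_of_lt_of_le hr_pos hρM0_ge
  -- the approximation tolerances
  obtain ⟨εs, hεsdef⟩ : ∃ εs : ℕ → ℝ, εs = fun j : ℕ => min η (1 / (j + 1 : ℝ)) := ⟨_, rfl⟩
  have hεs_pos : ∀ j, 0 < εs j := by
    intro j; rw [hεsdef]
    exact lt_min hη_pos (by positivity)
  have hεs_le_η : ∀ j, εs j ≤ η := by intro j; rw [hεsdef]; exact min_le_left _ _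
  have hεs_le_inv : ∀ j, εs j ≤ 1 / (j + 1) := by
    intro j; rw [hεsdef]; exact min_le_right _ _
  -- selection of nearly optimal blocks
  have hsel_ex : ∀ j N : ℕ, ∃ p : C₀(ℕ, ℝ) × ℕ, N < p.2 ∧ ‖p.1‖ ≤ 1 ∧
      (∀ i, i < N → p.1 i = 0) ∧ (∀ i, p.2 ≤ i → p.1 i = 0) ∧
      ρ N - εs j * a < ‖J p.1‖ ∧ ‖J p.1‖ ≤ ρ N := by
    intro j N
    have hlt : ρ N - εs j * a < ρ N := by
      have h3 : 0 < εs j * a := mul_pos (hεs_pos j) ha_pos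
      linarith
    have hlt' : ρ N - εs j * a < sSup (SSet N) := by
      conv_rhs at hlt => rw [hρdef]
      exact hlt
    obtain ⟨x, hx, hxlt⟩ := exists_lt_of_lt_csSup (hSS_ne N) hlt'
    rw [hSSdef] at hx
    obtain ⟨g, ⟨h1, h2, B, h3⟩, rfl⟩ := hx
    refine ⟨(g, max B (N + 1)), by simp only []; omega, h1, h2,
      fun i hi => h3 i (le_trans (le_max_left _ _) hi), hxlt,
      hρ_ub N g h1 h2 ⟨B, h3⟩⟩
  obtain ⟨sel, hselspec⟩ : ∃ sel : ℕ → ℕ → C₀(ℕ, ℝ) × ℕ, ∀ j N,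
      N < (sel j N).2 ∧ ‖(sel j N).1‖ ≤ 1 ∧
      (∀ i, i < N → (sel j N).1 i = 0) ∧ (∀ i, (sel j N).2 ≤ i → (sel j N).1 i = 0) ∧
      ρ N - εs j * a < ‖J (sel j N).1‖ ∧ ‖J (sel j N).1‖ ≤ ρ N :=
    ⟨fun j N => (hsel_ex j N).choose, fun j N => (hsel_ex j N).choose_spec⟩
  -- the recursion
  obtain ⟨M, hMdef⟩ : ∃ M : ℕ → ℕ, M = StmtAux.MS sel N1 := ⟨_, rfl⟩
  have hM0 : M 0 = N1 := by rw [hMdef]; rfl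
  have hMsucc : ∀ j, M (j + 1) = (sel j (M j)).2 := by intro j; rw [hMdef]; rfl
  obtain ⟨y, hydef⟩ : ∃ y : ℕ → C₀(ℕ, ℝ), y = fun j => (sel j (M j)).1 := ⟨_, rfl⟩
  have hy_apply : ∀ j, y j = (sel j (M j)).1 := by intro j; rw [hydef]
  have hMlt : ∀ j, M j < M (j + 1) := by
    intro j; rw [hMsucc]; exact (hselspec j (M j)).1
  have hy_norm : ∀ j, ‖y j‖ ≤ 1 := by
    intro j; rw [hy_apply]; exact (hselspec j (M j)).2.1
  have hy_lo : ∀ j i, i < M j → y j i = 0 := by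
    intro j i hi; rw [hy_apply]; exact (hselspec j (M j)).2.2.1 i hi
  have hy_hi : ∀ j i, M (j + 1) ≤ i → y j i = 0 := by
    intro j i hi; rw [hy_apply]
    exact (hselspec j (M j)).2.2.2.1 i (by rw [hMsucc] at hi; exact hi)
  have hJy_lb : ∀ j, ρ (M j) - εs j * a < ‖J (y j)‖ := by
    intro j; rw [hy_apply]; exact (hselspec j (M j)).2.2.2.2.1
  have hJy_ub : ∀ j, ‖J (y j)‖ ≤ ρ (M j) := by
    intro j; rw [hy_apply]; exact (hselspec j (M j)).2.2.2.2.2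
  have hM_mono : StrictMono M := strictMono_nat_of_lt_succ hMlt
  have hM_le : ∀ j, j ≤ M j := fun j => hM_mono.le_apply
  -- normalization constants
  obtain ⟨μ, hμdef⟩ : ∃ μ : ℕ → ℝ, μ = fun j => max r ‖J (y j)‖ := ⟨_, rfl⟩
  have hμ_ge_r : ∀ j, r ≤ μ j := by intro j; rw [hμdef]; exact le_max_left _ _
  have hμ_pos : ∀ j, 0 < μ j := fun j => lt_of_lt_of_le hr_pos (hμ_ge_r j)
  have hμ_ge_Jy : ∀ j, ‖J (y j)‖ ≤ μ j := by intro j; rw [hμdef]; exact le_max_right _ _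
  have hμ_le_ρ : ∀ j, μ j ≤ ρ (M j) := by
    intro j; rw [hμdef]; exact max_le (hr_le _) (hJy_ub j)
  -- disjointness of supports
  have hsupp : ∀ j i, y j i ≠ 0 → M j ≤ i ∧ i < M (j + 1) := by
    intro j i h
    constructor
    · by_contra hc; exact h (hy_lo j i (not_le.1 hc))
    · by_contra hc; exact h (hy_hi j i (not_lt.1 hc))
  have hdisj : ∀ j j' i, j ≠ j' → y j i ≠ 0 → y j' i = 0 := by
    intro j j' i hne hji
    by_contra hj'
    obtain ⟨h1, h2⟩ := hsupp j i hji
    obtain ⟨h3, h4⟩ := hsupp j' i hj'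
    rcases lt_or_gt_of_ne hne with h | h
    · have : M (j + 1) ≤ M j' := hM_mono.monotone (by omega)
      omega
    · have : M (j' + 1) ≤ M j := hM_mono.monotone (by omega)
      omega
  -- norming vector for the first block
  have hJy0_lb : ρ N1 - η * a < ‖J (y 0)‖ := by
    have h1 := hJy_lb 0
    rw [hM0] at h1
    have h2 : εs 0 * a ≤ η * a := mul_le_mul_of_nonneg_right (hεs_le_η 0) ha_pos.le
    linarith
  have hJy0_ub : ‖J (y 0)‖ ≤ ρ N1 := by have := hJy_ub 0; rwa [hM0] at this
  have hC_pos : 0 < ‖J (y 0)‖ - η * a := by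
    have h3 : a ≤ ρ N1 := hρ_ge_a N1
    have h4 : η * a ≤ (1 / 10) * a := mul_le_mul_of_nonneg_right hη_le ha_pos.le
    linarith
  obtain ⟨v0, hv0_norm, hv0_val⟩ :
      ∃ v0 : X, ‖v0‖ ≤ 1 ∧ ‖J (y 0)‖ - η * a < J (y 0) v0 := by
    by_contra h
    push_neg at h
    have hb : ∀ v : X, |J (y 0) v| ≤ (‖J (y 0)‖ - η * a) * ‖v‖ := by
      intro v
      rcases eq_or_ne v 0 with rfl | hv
      · simp
      · have hvpos : 0 < ‖v‖ := norm_pos_iff.2 hv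
        have hnv : ‖‖v‖⁻¹ • v‖ ≤ 1 := by
          rw [norm_smul, norm_inv, norm_norm, inv_mul_cancel₀ hvpos.ne']
        have h1 : J (y 0) (‖v‖⁻¹ • v) ≤ ‖J (y 0)‖ - η * a := h _ hnv
        have h2 : J (y 0) (-(‖v‖⁻¹ • v)) ≤ ‖J (y 0)‖ - η * a := h _ (by rwa [norm_neg])
        rw [map_neg] at h2
        have h3 : J (y 0) (‖v‖⁻¹ • v) = ‖v‖⁻¹ * J (y 0) v := by
          rw [map_smul, smul_eq_mul]
        rw [h3] at h1 h2
        have h4 : |‖v‖⁻¹ * J (y 0) v| ≤ ‖J (y 0)‖ - η * a := abs_le.2 ⟨by linarith, h1⟩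
        rw [abs_mul, abs_of_nonneg (inv_nonneg.2 hvpos.le)] at h4
        calc |J (y 0) v| = ‖v‖ * (‖v‖⁻¹ * |J (y 0) v|) := by field_simp
        _ ≤ ‖v‖ * (‖J (y 0)‖ - η * a) := mul_le_mul_of_nonneg_left h4 hvpos.le
        _ = (‖J (y 0)‖ - η * a) * ‖v‖ := by ring
    have h5 : ‖J (y 0)‖ ≤ ‖J (y 0)‖ - η * a :=
      (J (y 0)).opNorm_le_bound hC_pos.le fun v => by rw [Real.norm_eq_abs]; exact hb v
    have h6 : 0 < η * a := mul_pos hη_pos ha_pos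
    linarith
  -- choosing how many blocks to skip
  obtain ⟨Jk, hJk⟩ : ∃ Jk : ℕ, G (M Jk) v0 < η * a := by
    have h6 : 0 < η * a := mul_pos hη_pos ha_pos
    have h7 := (hG_tend v0).eventually (gt_mem_nhds h6)
    obtain ⟨N', hN'⟩ := h7.exists
    exact ⟨N', lt_of_le_of_lt (hG_anti N' (M N') v0 (hM_le N')) hN'⟩
  obtain ⟨q, hqdef⟩ : ∃ q : ℕ → ℕ, q = fun k => if k = 0 then 0 else Jk + k := ⟨_, rfl⟩
  have hq0 : q 0 = 0 := by rw [hqdef]; rfl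
  have hq_apply : ∀ k, k ≠ 0 → q k = Jk + k := by intro k hk; rw [hqdef]; simp [hk]
  have hq_mono : StrictMono q := by
    apply strictMono_nat_of_lt_succ
    intro k
    rcases Nat.eq_zero_or_pos k with rfl | hk
    · rw [hq0, hq_apply 1 one_ne_zero]; omega
    · rw [hq_apply k (by omega), hq_apply (k + 1) (by omega)]; omega
  have hq_ge : ∀ k, k ≤ q k := fun k => hq_mono.le_apply
  have hq_succ : ∀ k, q k + 1 ≤ q (k + 1) := by
    intro k
    rcases Nat.eq_zero_or_pos k with rfl | hk
    · rw [hq0, hq_apply 1 one_ne_zero]; omega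
    · rw [hq_apply k (by omega), hq_apply (k + 1) (by omega)]; omega
  have hq1 : q 1 = Jk + 1 := hq_apply 1 one_ne_zero
  -- the normalized blocks
  obtain ⟨Y, hYdef⟩ : ∃ Y : ℕ → C₀(ℕ, ℝ), Y = fun j => (μ (q j))⁻¹ • y (q j) := ⟨_, rfl⟩
  have hY_apply : ∀ j i, Y j i = (μ (q j))⁻¹ * y (q j) i := by
    intro j i; rw [hYdef]; rfl
  obtain ⟨u, hudef⟩ : ∃ u : ℕ → (X →L[ℝ] ℝ), u = fun k => J (Y k) := ⟨_, rfl⟩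
  have hu_apply : ∀ k, u k = J (Y k) := by intro k; rw [hudef]
  obtain ⟨z, hzdef⟩ : ∃ z : ℕ → (X →L[ℝ] ℝ),
      z = fun m => ∑ j ∈ Finset.range (m + 1), u j := ⟨_, rfl⟩
  have hz_apply : ∀ m, z m = ∑ j ∈ Finset.range (m + 1), u j := by intro m; rw [hzdef]
  -- the key combination estimate
  have hcombo : ∀ (m : ℕ) (γ : ℕ → ℝ) (β : ℝ), 0 < β → (∀ j, |γ j| ≤ β) →
      ‖J (∑ j ∈ Finset.range (m + 1), γ j • Y j)‖ ≤ β * ρ N1 / r := by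
    intro m γ β hβ hγ
    have hterm : ∀ j i, (γ j • Y j) i = γ j * ((μ (q j))⁻¹ * y (q j) i) := by
      intro j i
      rw [ZeroAtInftyContinuousMap.smul_apply, hY_apply, smul_eq_mul]
    have hpoint : ∀ i, |(∑ j ∈ Finset.range (m + 1), γ j • Y j) i| ≤ β / r := by
      intro i
      rw [C0_sum_apply]
      by_cases hex : ∃ j ∈ Finset.range (m + 1), y (q j) i ≠ 0
      · obtain ⟨j0, hj0m, hj0⟩ := hex
        rw [Finset.sum_eq_single j0 (fun b hb hbne => by
            rw [hterm b, hdisj (q j0) (q b) i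
              (fun hqq => hbne (hq_mono.injective hqq).symm) hj0]; ring)
          (fun h => absurd hj0m h)]
        rw [hterm j0]
        have h1 : |y (q j0) i| ≤ 1 := le_trans (C0_abs_le_norm _ _) (hy_norm _)
        have h2 : (μ (q j0))⁻¹ ≤ r⁻¹ := inv_anti₀ hr_pos (hμ_ge_r _)
        have h3 : (0:ℝ) ≤ (μ (q j0))⁻¹ := inv_nonneg.2 (hμ_pos _).le
        rw [abs_mul, abs_mul, abs_of_nonneg h3]
        have h4 : (μ (q j0))⁻¹ * |y (q j0) i| ≤ r⁻¹ := by
          calc (μ (q j0))⁻¹ * |y (q j0) i| ≤ (μ (q j0))⁻¹ * 1 :=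
            mul_le_mul_of_nonneg_left h1 h3
          _ ≤ r⁻¹ := by rwa [mul_one]
        calc |γ j0| * ((μ (q j0))⁻¹ * |y (q j0) i|) ≤ β * r⁻¹ :=
          mul_le_mul (hγ j0) h4 (mul_nonneg h3 (abs_nonneg _)) hβ.le
        _ = β / r := (div_eq_mul_inv β r).symm
      · push_neg at hex
        rw [Finset.sum_eq_zero fun j hj => by rw [hterm j, hex j hj]; ring]
        rw [abs_zero]
        positivity
    have hslo : ∀ i, i < N1 → (∑ j ∈ Finset.range (m + 1), γ j • Y j) i = 0 := by
      intro i hi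
      rw [C0_sum_apply]
      refine Finset.sum_eq_zero fun j hj => ?_
      rw [hterm j]
      have hN1le : N1 ≤ M (q j) := by rw [← hM0]; exact hM_mono.monotone (Nat.zero_le _)
      rw [hy_lo (q j) i (by omega)]
      ring
    have hshi : ∀ i, M (q m + 1) ≤ i → (∑ j ∈ Finset.range (m + 1), γ j • Y j) i = 0 := by
      intro i hi
      rw [C0_sum_apply]
      refine Finset.sum_eq_zero fun j hj => ?_
      rw [hterm j]
      have hjm : q j + 1 ≤ q m + 1 := by
        have : q j ≤ q m := hq_mono.monotone (by rw [Finset.mem_range] at hj; omega)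
        omega
      rw [hy_hi (q j) i (le_trans (hM_mono.monotone hjm) hi)]
      ring
    have hnorm_scaled : ‖(r / β) • (∑ j ∈ Finset.range (m + 1), γ j • Y j)‖ ≤ 1 := by
      refine C0_norm_le _ 1 one_pos.le fun i => ?_
      rw [ZeroAtInftyContinuousMap.smul_apply, smul_eq_mul, abs_mul,
        abs_of_nonneg (by positivity : (0:ℝ) ≤ r / β)]
      calc (r / β) * |(∑ j ∈ Finset.range (m + 1), γ j • Y j) i| ≤ (r / β) * (β / r) :=
        mul_le_mul_of_nonneg_left (hpoint i) (by positivity)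
      _ = 1 := by field_simp
    have hmem : ‖J ((r / β) • ∑ j ∈ Finset.range (m + 1), γ j • Y j)‖ ≤ ρ N1 := by
      refine hρ_ub N1 _ hnorm_scaled (fun i hi => ?_) ⟨M (q m + 1), fun i hi => ?_⟩
      · rw [ZeroAtInftyContinuousMap.smul_apply, hslo i hi, smul_eq_mul, mul_zero]
      · rw [ZeroAtInftyContinuousMap.smul_apply, hshi i hi, smul_eq_mul, mul_zero]
    have heq : J (∑ j ∈ Finset.range (m + 1), γ j • Y j)
        = (β / r) • J ((r / β) • ∑ j ∈ Finset.range (m + 1), γ j • Y j) := by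
      rw [map_smul, smul_smul, show (β / r) * (r / β) = 1 by field_simp, one_smul]
    have hns := norm_smul (β / r) (J ((r / β) • ∑ j ∈ Finset.range (m + 1), γ j • Y j))
    rw [Real.norm_eq_abs, abs_of_nonneg (by positivity : (0:ℝ) ≤ β / r)] at hns
    rw [heq, hns]
    have hfin := mul_le_mul_of_nonneg_left hmem (by positivity : (0:ℝ) ≤ β / r)
    have hring : (β / r) * ρ N1 = β * ρ N1 / r := by ring
    linarith
  have hY_eq : ∀ j, Y j = (μ (q j))⁻¹ • y (q j) := fun j => by rw [hYdef]
  -- bound on partial sums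
  have hz_eq : ∀ m, z m = J (∑ j ∈ Finset.range (m + 1), Y j) := by
    intro m
    rw [hz_apply, map_sum]
    exact Finset.sum_congr rfl fun j _ => hu_apply j
  have hz_norm : ∀ m, ‖z m‖ ≤ ρ N1 / r := by
    intro m
    have h0 := hcombo m (fun _ => 1) 1 one_pos (fun j => by norm_num)
    rw [one_mul] at h0
    have h0' : (∑ j ∈ Finset.range (m + 1), (fun _ : ℕ => (1:ℝ)) j • Y j)
        = ∑ j ∈ Finset.range (m + 1), Y j :=
      Finset.sum_congr rfl fun j _ => one_smul ℝ (Y j)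
    rw [h0'] at h0
    rw [hz_eq]
    exact h0
  have hz2 : ∀ m, ‖z m‖ ≤ 2 := by
    intro m
    refine le_trans (hz_norm m) ?_
    rw [div_le_iff₀ hr_pos]
    have h3 : η * a ≤ (1 / 10) * a := mul_le_mul_of_nonneg_right hη_le ha_pos.le
    linarith
  -- the scaling constant
  obtain ⟨t, htdef⟩ : ∃ t : ℝ, t = r / ρ N1 := ⟨_, rfl⟩
  have ht_pos : 0 < t := by rw [htdef]; positivity
  have ht_le1 : t ≤ 1 := by rw [htdef, div_le_one hρM0_pos]; exact hρM0_ge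
  have ht_half : 1 - t ≤ t := by
    have h2 : ρ N1 ≤ 2 * r := by
      have h3 : η * a ≤ (1 / 10) * a := mul_le_mul_of_nonneg_right hη_le ha_pos.le
      linarith
    rw [htdef]
    have h4 : (ρ N1 - r) / ρ N1 ≤ r / ρ N1 := by
      gcongr
      linarith

    calc 1 - r / ρ N1 = (ρ N1 - r) / ρ N1 := by field_simp
    _ ≤ r / ρ N1 := h4
  have ht_eq : t * ρ N1 = r := by rw [htdef]; field_simp
  have ht_1η : 1 ≤ t * (1 + η) := by
    rw [htdef, div_mul_eq_mul_div, le_div_iff₀ hρM0_pos, one_mul]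
    have h3 : η * a ≤ η * r := mul_le_mul_of_nonneg_left ha_le_r hη_pos.le
    have h5 : r * (1 + η) = r + η * r := by ring
    linarith
  -- difference estimate
  have hB : ∀ k m, k ≤ m → ‖u k - t • z m‖ ≤ 1 := by
    intro k m hkm
    have hYk : ∑ j ∈ Finset.range (m + 1), (if j = k then (1:ℝ) else 0) • Y j = Y k := by
      have h1 : ∀ j ∈ Finset.range (m + 1), (if j = k then (1:ℝ) else 0) • Y j
          = if j = k then Y j else 0 := by
        intro j _; split <;> simp
      rw [Finset.sum_congr rfl h1, Finset.sum_ite_eq' (Finset.range (m + 1)) k Y,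
        if_pos (Finset.mem_range.2 (by omega))]
    have hdiff : u k - t • z m
        = J (∑ j ∈ Finset.range (m + 1), ((if j = k then (1:ℝ) else 0) - t) • Y j) := by
      have h2 : ∑ j ∈ Finset.range (m + 1), ((if j = k then (1:ℝ) else 0) - t) • Y j
          = (∑ j ∈ Finset.range (m + 1), (if j = k then (1:ℝ) else 0) • Y j)
            - t • ∑ j ∈ Finset.range (m + 1), Y j :=
        by
        ext i
        simp only [C0_sum_apply, ZeroAtInftyContinuousMap.sub_apply,
          ZeroAtInftyContinuousMap.smul_apply, smul_eq_mul, Finset.mul_sum]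
        rw [← Finset.sum_sub_distrib]
        exact Finset.sum_congr rfl fun j _ => by ring
      rw [h2, hYk, map_sub, map_smul, ← hu_apply, ← hz_eq]
    rw [hdiff]
    have h3 : ∀ j, |(if j = k then (1:ℝ) else 0) - t| ≤ t := by
      intro j; split
      · rw [abs_of_nonneg (sub_nonneg.2 ht_le1)]; exact ht_half
      · rw [zero_sub, abs_neg, abs_of_pos ht_pos]
    refine le_trans (hcombo m _ t ht_pos h3) ?_
    rw [ht_eq, div_self hr_pos.ne']
  -- properties of the sequence u
  have h1u : ∀ k, ‖u k‖ ≤ 1 := by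
    intro k
    have hns := norm_smul ((μ (q k))⁻¹) (J (y (q k)))
    rw [Real.norm_eq_abs, abs_of_nonneg (inv_nonneg.2 (hμ_pos (q k)).le)] at hns
    rw [hu_apply, hY_eq, map_smul, hns]
    calc (μ (q k))⁻¹ * ‖J (y (q k))‖ ≤ (μ (q k))⁻¹ * μ (q k) :=
      mul_le_mul_of_nonneg_left (hμ_ge_Jy (q k)) (inv_nonneg.2 (hμ_pos (q k)).le)
    _ = 1 := inv_mul_cancel₀ (hμ_pos (q k)).ne'
  have hu_lb : ∀ k : ℕ, 1 - 1 / ((k : ℝ) + 1) ≤ ‖u k‖ := by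
    intro k
    have hδ : (0:ℝ) ≤ 1 / ((k : ℝ) + 1) := by positivity
    have hJlb : r - (1 / ((k : ℝ) + 1)) * a ≤ ‖J (y (q k))‖ := by
      have h5 := hJy_lb (q k)
      have h6 : εs (q k) ≤ 1 / ((k : ℝ) + 1) := by
        refine le_trans (hεs_le_inv (q k)) ?_
        apply one_div_le_one_div_of_le (by positivity)
        have hc : (k : ℝ) ≤ (q k : ℝ) := Nat.cast_le.2 (hq_ge k)
        linarith
      have h7 : εs (q k) * a ≤ (1 / ((k : ℝ) + 1)) * a := mul_le_mul_of_nonneg_right h6 ha_pos.le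
      have h8 : r ≤ ρ (M (q k)) := hr_le _
      linarith
    have hkey : (1 - 1 / ((k : ℝ) + 1)) * μ (q k) ≤ ‖J (y (q k))‖ := by
      rcases le_total ‖J (y (q k))‖ r with h | h
      · have hμr : μ (q k) = r := by rw [hμdef]; exact max_eq_left h
        rw [hμr]
        have h9 : (1 / ((k : ℝ) + 1)) * a ≤ (1 / ((k : ℝ) + 1)) * r :=
          mul_le_mul_of_nonneg_left ha_le_r hδ
        have h10 : (1 - 1 / ((k : ℝ) + 1)) * r = r - (1 / ((k : ℝ) + 1)) * r := by ring
        linarith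
      · have hμr : μ (q k) = ‖J (y (q k))‖ := by rw [hμdef]; exact max_eq_right h
        rw [hμr]
        have hδ1 : 1 / ((k : ℝ) + 1) ≤ 1 := by
          rw [div_le_one (by positivity)]
          have := Nat.cast_nonneg (α := ℝ) k
          linarith
        have h10 : 0 ≤ ‖J (y (q k))‖ := norm_nonneg _
        have h11 : (1 - 1 / ((k : ℝ) + 1)) * ‖J (y (q k))‖ ≤ 1 * ‖J (y (q k))‖ :=
          mul_le_mul_of_nonneg_right (by linarith) h10
        linarith
    have hnormu : ‖u k‖ = (μ (q k))⁻¹ * ‖J (y (q k))‖ := by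
      have hns := norm_smul ((μ (q k))⁻¹) (J (y (q k)))
      rw [Real.norm_eq_abs, abs_of_nonneg (inv_nonneg.2 (hμ_pos (q k)).le)] at hns
      rw [hu_apply, hY_eq, map_smul, hns]
    rw [hnormu]
    have h12 := mul_le_mul_of_nonneg_left hkey (inv_nonneg.2 (hμ_pos (q k)).le)
    rw [show (μ (q k))⁻¹ * ((1 - 1 / ((k : ℝ) + 1)) * μ (q k)) = 1 - 1 / ((k : ℝ) + 1) from by
      rw [mul_comm ((μ (q k))⁻¹) _, mul_assoc, mul_inv_cancel₀ (hμ_pos (q k)).ne', mul_one]] at h12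
    exact h12
  have hlow_tend : Tendsto (fun k : ℕ => 1 - 1 / ((k : ℝ) + 1)) atTop (𝓝 1) := by
    have h := tendsto_one_div_add_atTop_nhds_zero_nat (𝕜 := ℝ)
    have h2 := (tendsto_const_nhds (x := (1:ℝ)) (f := atTop)).sub h
    simpa using h2
  have h3u : Tendsto (fun k => ‖u k‖) atTop (𝓝 1) :=
    tendsto_of_tendsto_of_tendsto_of_le_of_le hlow_tend tendsto_const_nhds hu_lb h1u
  -- weak* nullity
  have hu_val : ∀ k v, u k v = (μ (q k))⁻¹ * (J (y (q k)) v) := by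
    intro k v
    rw [hu_apply, hY_eq, map_smul]
    rfl
  have hu_val_abs : ∀ k v, |u k v| ≤ r⁻¹ * G (M (q k)) v := by
    intro k v
    have habs : |J (y (q k)) v| ≤ G (M (q k)) v := by
      have h12 := hJg_v (y (q k)) (M (q k)) (M (q k + 1)) v (le_of_lt (hMlt (q k)))
        (hy_norm _) (fun i hi => hy_lo _ i hi) (fun i hi => hy_hi _ i hi)
      have h13 := hG_nonneg (M (q k + 1)) v
      linarith
    have h14 : (μ (q k))⁻¹ ≤ r⁻¹ := inv_anti₀ hr_pos (hμ_ge_r _)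
    rw [hu_val, abs_mul, abs_of_nonneg (inv_nonneg.2 (hμ_pos (q k)).le)]
    calc (μ (q k))⁻¹ * |J (y (q k)) v| ≤ r⁻¹ * |J (y (q k)) v| :=
      mul_le_mul_of_nonneg_right h14 (abs_nonneg _)
    _ ≤ r⁻¹ * G (M (q k)) v := mul_le_mul_of_nonneg_left habs (inv_nonneg.2 hr_pos.le)
  have h2u : ∀ v : X, Tendsto (fun k => u k v) atTop (𝓝 0) := by
    intro v
    have hbound : ∀ k, ‖u k v‖ ≤ r⁻¹ * G k v := by
      intro k
      rw [Real.norm_eq_abs]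
      refine le_trans (hu_val_abs k v) ?_
      exact mul_le_mul_of_nonneg_left
        (hG_anti k (M (q k)) v (le_trans (hq_ge k) (hM_le (q k)))) (inv_nonneg.2 hr_pos.le)
    have htend : Tendsto (fun k => r⁻¹ * G k v) atTop (𝓝 0) := by
      have := (hG_tend v).const_mul r⁻¹
      simpa using this
    exact squeeze_zero_norm hbound htend
  -- the weak* cluster point of the partial sums
  obtain ⟨U, hU_le⟩ : ∃ U : Ultrafilter ℕ, (U : Filter ℕ) ≤ atTop :=
    ⟨Ultrafilter.of atTop, Ultrafilter.of_le _⟩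
  have hUlim : ∀ v : X, ∃ L : ℝ, Tendsto (fun m => z m v) (U : Filter ℕ) (𝓝 L) := by
    intro v
    have hmem : ∀ m, z m v ∈ Set.Icc (-(2 * ‖v‖)) (2 * ‖v‖) := by
      intro m
      have h15 : |z m v| ≤ 2 * ‖v‖ := by
        rw [← Real.norm_eq_abs]
        calc ‖z m v‖ ≤ ‖z m‖ * ‖v‖ := (z m).le_opNorm v
        _ ≤ 2 * ‖v‖ := mul_le_mul_of_nonneg_right (hz2 m) (norm_nonneg v)
      rw [abs_le] at h15
      exact ⟨h15.1, h15.2⟩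
    obtain ⟨L, -, hL⟩ := (isCompact_Icc (a := -(2 * ‖v‖)) (b := 2 * ‖v‖)).ultrafilter_le_nhds
      (U.map fun m => z m v) (le_principal_iff.2 (Filter.mem_map.2 (Filter.univ_mem' hmem)))
    exact ⟨L, hL⟩
  obtain ⟨φ, hφ⟩ : ∃ φ : X → ℝ, ∀ v, Tendsto (fun m => z m v) (U : Filter ℕ) (𝓝 (φ v)) :=
    ⟨fun v => (hUlim v).choose, fun v => (hUlim v).choose_spec⟩
  have hφ_add : ∀ v v', φ (v + v') = φ v + φ v' := by
    intro v v'
    have h16 : Tendsto (fun m => z m (v + v')) (U : Filter ℕ) (𝓝 (φ v + φ v')) := by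
      refine Tendsto.congr (fun m => ?_) ((hφ v).add (hφ v'))
      exact (map_add (z m) v v').symm
    exact tendsto_nhds_unique (hφ (v + v')) h16
  have hφ_smul : ∀ (c : ℝ) (v : X), φ (c • v) = c * φ v := by
    intro c v
    have h17 : Tendsto (fun m => z m (c • v)) (U : Filter ℕ) (𝓝 (c * φ v)) := by
      refine Tendsto.congr (fun m => ?_) ((hφ v).const_mul c)
      rw [map_smul, smul_eq_mul]
    exact tendsto_nhds_unique (hφ (c • v)) h17
  have hφ_bd : ∀ v, ‖φ v‖ ≤ 2 * ‖v‖ := by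
    intro v
    rw [Real.norm_eq_abs]
    refine le_of_tendsto (hφ v).abs (Eventually.of_forall fun m => ?_)
    rw [← Real.norm_eq_abs]
    calc ‖z m v‖ ≤ ‖z m‖ * ‖v‖ := (z m).le_opNorm v
    _ ≤ 2 * ‖v‖ := mul_le_mul_of_nonneg_right (hz2 m) (norm_nonneg v)
  obtain ⟨w, hw_apply⟩ : ∃ w : X →L[ℝ] ℝ, ∀ v, w v = φ v := by
    refine ⟨LinearMap.mkContinuous ⟨⟨φ, hφ_add⟩, fun c v => ?_⟩ 2 hφ_bd, fun v => rfl⟩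
    simpa using hφ_smul c v
  -- the liminf condition
  have hdiff_le : ∀ k, ‖u k - t • w‖ ≤ 1 := by
    intro k
    refine ContinuousLinearMap.opNorm_le_bound _ zero_le_one fun v => ?_
    have h19 : Tendsto (fun m => u k v - t * z m v) (U : Filter ℕ) (𝓝 (u k v - t * φ v)) :=
      tendsto_const_nhds.sub ((hφ v).const_mul t)
    have h20 : ∀ᶠ m in (U : Filter ℕ), |u k v - t * z m v| ≤ ‖v‖ := by
      filter_upwards [hU_le (eventually_ge_atTop k)] with m hm
      have h21 : u k v - t * z m v = (u k - t • z m) v := by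
        rw [ContinuousLinearMap.sub_apply, ContinuousLinearMap.smul_apply, smul_eq_mul]
      rw [h21, ← Real.norm_eq_abs]
      calc ‖(u k - t • z m) v‖ ≤ ‖u k - t • z m‖ * ‖v‖ := (u k - t • z m).le_opNorm v
      _ ≤ 1 * ‖v‖ := mul_le_mul_of_nonneg_right (hB k m hm) (norm_nonneg v)
      _ = ‖v‖ := one_mul _
    have h22 : |u k v - t * φ v| ≤ ‖v‖ := le_of_tendsto h19.abs h20
    have h23 : (u k - t • w) v = u k v - t * φ v := by
      rw [ContinuousLinearMap.sub_apply, ContinuousLinearMap.smul_apply, smul_eq_mul, hw_apply]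
    rw [Real.norm_eq_abs, one_mul, h23]
    exact h22
  have h4u : liminf (fun k => ‖u k - t • w‖) atTop ≤ 1 := by
    have hlm : liminf (fun k => ‖u k - t • w‖) atTop ≤ liminf (fun _ : ℕ => (1:ℝ)) atTop := by
      refine liminf_le_liminf (Eventually.of_forall hdiff_le) ?_ ?_
      · exact isBoundedUnder_of ⟨0, fun k => norm_nonneg _⟩
      · exact isBoundedUnder_const.isCoboundedUnder_ge
    simpa [liminf_const] using hlm
  -- apply Property (K*)
  have hKbound := hprop u (t • w) h1u h2u h3u h4u
  -- lower bound for the cluster point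
  have hu0_v0 : 1 - 2 * η ≤ u 0 v0 := by
    have hval : u 0 v0 = (μ 0)⁻¹ * (J (y 0) v0) := by
      rw [hu_val 0 v0, hq0]
    have hμ0_le : μ 0 ≤ ρ N1 := by have := hμ_le_ρ 0; rwa [hM0] at this
    have hμ0_ge_a : a ≤ μ 0 := le_trans ha_le_r (hμ_ge_r 0)
    have hkey0 : (1 - 2 * η) * μ 0 ≤ J (y 0) v0 := by
      have h24 : ρ N1 - 2 * (η * a) < J (y 0) v0 := by linarith [hv0_val, hJy0_lb]
      have h25 : η * a ≤ η * μ 0 := mul_le_mul_of_nonneg_left hμ0_ge_a hη_pos.le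
      have h26 : (1 - 2 * η) * μ 0 = μ 0 - 2 * (η * μ 0) := by ring
      linarith
    have h27 := mul_le_mul_of_nonneg_left hkey0 (inv_nonneg.2 (hμ_pos 0).le)
    rw [show (μ 0)⁻¹ * ((1 - 2 * η) * μ 0) = 1 - 2 * η from by
      rw [mul_comm ((μ 0)⁻¹) _, mul_assoc, mul_inv_cancel₀ (hμ_pos 0).ne', mul_one]] at h27
    rw [hval]
    exact h27
  have hterm_tail : ∀ j, |u j v0| ≤ r⁻¹ * (G (M (q j)) v0 - G (M (q (j + 1))) v0) := by
    intro j
    have habs : |J (y (q j)) v0| ≤ G (M (q j)) v0 - G (M (q j + 1)) v0 :=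
      hJg_v (y (q j)) (M (q j)) (M (q j + 1)) v0 (le_of_lt (hMlt (q j)))
        (hy_norm _) (fun i hi => hy_lo _ i hi) (fun i hi => hy_hi _ i hi)
    have hstep : G (M (q (j + 1))) v0 ≤ G (M (q j + 1)) v0 :=
      hG_anti _ _ v0 (hM_mono.monotone (hq_succ j))
    have h28 : (μ (q j))⁻¹ ≤ r⁻¹ := inv_anti₀ hr_pos (hμ_ge_r _)
    have h29 : |J (y (q j)) v0| ≤ G (M (q j)) v0 - G (M (q (j + 1))) v0 := by linarith
    rw [hu_val, abs_mul, abs_of_nonneg (inv_nonneg.2 (hμ_pos (q j)).le)]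
    calc (μ (q j))⁻¹ * |J (y (q j)) v0| ≤ r⁻¹ * |J (y (q j)) v0| :=
      mul_le_mul_of_nonneg_right h28 (abs_nonneg _)
    _ ≤ r⁻¹ * (G (M (q j)) v0 - G (M (q (j + 1))) v0) :=
      mul_le_mul_of_nonneg_left h29 (inv_nonneg.2 hr_pos.le)
  have htail : ∀ m, ∑ j ∈ Finset.Ico 1 (m + 1), |u j v0| ≤ η := by
    intro m
    have h30 : ∑ j ∈ Finset.Ico 1 (m + 1), |u j v0|
        ≤ ∑ j ∈ Finset.Ico 1 (m + 1), r⁻¹ * (G (M (q j)) v0 - G (M (q (j + 1))) v0) :=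
      Finset.sum_le_sum fun j _ => hterm_tail j
    have h31 : ∑ j ∈ Finset.Ico 1 (m + 1), r⁻¹ * (G (M (q j)) v0 - G (M (q (j + 1))) v0)
        = r⁻¹ * (G (M (q 1)) v0 - G (M (q (m + 1))) v0) := by
      rw [← Finset.mul_sum]
      congr 1
      exact tele (fun j => G (M (q j)) v0) m
    have h33 : G (M (q 1)) v0 ≤ η * a := by
      have h34 : M Jk ≤ M (q 1) := hM_mono.monotone (by rw [hq1]; omega)
      exact le_trans (hG_anti _ _ v0 h34) hJk.le
    have h35 : 0 ≤ G (M (q (m + 1))) v0 := hG_nonneg _ _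
    have h36 : r⁻¹ * (η * a) ≤ η := by
      have h37 : η * a ≤ η * r := mul_le_mul_of_nonneg_left ha_le_r hη_pos.le
      calc r⁻¹ * (η * a) ≤ r⁻¹ * (η * r) :=
        mul_le_mul_of_nonneg_left h37 (inv_nonneg.2 hr_pos.le)
      _ = η := by field_simp
    calc ∑ j ∈ Finset.Ico 1 (m + 1), |u j v0|
        ≤ r⁻¹ * (G (M (q 1)) v0 - G (M (q (m + 1))) v0) := le_trans h30 (le_of_eq h31)
    _ ≤ r⁻¹ * (η * a) := mul_le_mul_of_nonneg_left (by linarith) (inv_nonneg.2 hr_pos.le)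
    _ ≤ η := h36
  have hz_v0 : ∀ m, 1 - 3 * η ≤ z m v0 := by
    intro m
    have hsplit : Finset.range (m + 1) = insert 0 (Finset.Ico 1 (m + 1)) := by
      ext x
      simp only [Finset.mem_range, Finset.mem_insert, Finset.mem_Ico]
      omega
    have hzv : z m v0 = u 0 v0 + ∑ j ∈ Finset.Ico 1 (m + 1), u j v0 := by
      rw [hz_apply, ContinuousLinearMap.sum_apply, hsplit, Finset.sum_insert (by simp)]
    have h39 := neg_abs_le (∑ j ∈ Finset.Ico 1 (m + 1), u j v0)
    have h38 := Finset.abs_sum_le_sum_abs (fun j => u j v0) (Finset.Ico 1 (m + 1))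
    have h40 := htail m
    rw [hzv]
    linarith [hu0_v0]
  have hφ_v0 : 1 - 3 * η ≤ φ v0 :=
    ge_of_tendsto (hφ v0) (Eventually.of_forall hz_v0)
  -- conclusion
  have hw_lb : 1 - 3 * η ≤ ‖w‖ := by
    have h41 : |w v0| ≤ ‖w‖ * ‖v0‖ := by rw [← Real.norm_eq_abs]; exact w.le_opNorm v0
    have h42 : ‖w‖ * ‖v0‖ ≤ ‖w‖ := by
      calc ‖w‖ * ‖v0‖ ≤ ‖w‖ * 1 := mul_le_mul_of_nonneg_left hv0_norm (norm_nonneg w)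
      _ = ‖w‖ := mul_one _
    have h43 : w v0 ≤ |w v0| := le_abs_self _
    have hwv : w v0 = φ v0 := hw_apply v0
    linarith [hφ_v0]
  have hnorm_tw : ‖t • w‖ = t * ‖w‖ := by
    have hns := norm_smul t w
    rw [Real.norm_eq_abs, abs_of_pos ht_pos] at hns
    exact hns
  have h44 : t * (1 - 3 * η) ≤ t * ‖w‖ := mul_le_mul_of_nonneg_left hw_lb ht_pos.le
  have h45 : t * (1 - 3 * η) ≤ K := by rw [hnorm_tw] at hKbound; linarith
  have h46 : 0 ≤ 1 - 3 * η := by linarith [hη_le]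
  have h47 := mul_le_mul_of_nonneg_right ht_1η h46
  have h48 : (t * (1 + η)) * (1 - 3 * η) = (t * (1 - 3 * η)) * (1 + η) := by ring
  have h49 : (t * (1 - 3 * η)) * (1 + η) ≤ K * (1 + η) :=
    mul_le_mul_of_nonneg_right h45 (by linarith)
  have h50 : 1 - 3 * η ≤ K * (1 + η) := by
    rw [h48] at h47
    linarith
  rw [hηdef] at h50
  have h51 : 0 < (1 - K) * (7 - K) := mul_pos (by linarith) (by linarith)
  have h52 : (1 - K) * (7 - K) = 7 - 8 * K + K * K := by ring
  rw [h52] at h51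
  have h53 : K * (1 + (1 - K) / 10) = (10 * K + K - K * K) / 10 := by ring
  rw [h53] at h50
  linarith
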